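/- The map M̃ ↦ (M̃·𝟙 + 𝟙·M̃)/n is idempotent on skew-symmetric matrices: applying it twice gives the same result as applying it once. In particular, if M̃ is already a TDOA matrix (M̃ = x·1̂ᵀ − 1̂·xᵀ with 1̂ᵀx = 0), then (M̃·𝟙 + 𝟙·M̃)/n = M̃. -/

import Mathlib

open Matrix

noncomputable def onehat (n : ℕ) : Fin n → ℝ := fun _ => (Real.sqrt n)⁻¹

def ones (n : ℕ) : Matrix (Fin n) (Fin n) ℝ := Matrix.of fun _ _ => 1

noncomputable def denoise (n : ℕ) (M : Matrix (Fin n) (Fin n) ℝ) :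
    Matrix (Fin n) (Fin n) ℝ := (n : ℝ)⁻¹ • (M * ones n + ones n * M)

lemma denoise_apply (n : ℕ) (M : Matrix (Fin n) (Fin n) ℝ) (i j : Fin n) :
    denoise n M i j = (n : ℝ)⁻¹ * ((∑ k, M i k) + ∑ k, M k j) := by
  simp [denoise, ones, Matrix.mul_apply, Matrix.add_apply]

theorem denoise_idempotent (n : ℕ) (hn : 0 < n) :
    (∀ Mt : Matrix (Fin n) (Fin n) ℝ, Mtᵀ = -Mt →
      denoise n (denoise n Mt) = denoise n Mt) ∧
    (∀ (x : Fin n → ℝ), onehat n ⬝ᵥ x = 0 →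
      denoise n (vecMulVec x (onehat n) - vecMulVec (onehat n) x) =
        vecMulVec x (onehat n) - vecMulVec (onehat n) x) := by
  have hn0 : (n : ℝ) ≠ 0 := Nat.cast_ne_zero.mpr hn.ne'
  constructor
  · intro M hM
    have hskew : ∀ i k, M k i = - M i k := fun i k => by
      have := congrFun (congrFun hM i) k
      simpa [Matrix.transpose_apply, Matrix.neg_apply] using this
    have hS : (∑ i, ∑ k, M i k) = 0 := by
      have h1 : (∑ i, ∑ k, M i k) = ∑ k, ∑ i, M i k := Finset.sum_comm
      have h2 : (∑ k, ∑ i, M i k) = - ∑ k, ∑ i, M k i := by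
        rw [← Finset.sum_neg_distrib]
        exact Finset.sum_congr rfl fun k _ => by
          rw [← Finset.sum_neg_distrib]
          exact Finset.sum_congr rfl fun i _ => hskew k i
      have h3 : (∑ k : Fin n, ∑ i : Fin n, M k i) = ∑ i, ∑ k, M i k := rfl
      rw [h3] at h2
      linarith
    ext i j
    rw [denoise_apply, denoise_apply]
    simp_rw [denoise_apply]
    simp only [← Finset.mul_sum, Finset.sum_add_distrib, Finset.sum_const,
      Finset.card_fin, nsmul_eq_mul]
    have hS2 : (∑ k, ∑ l, M l k) = 0 := by
      rw [Finset.sum_comm]; exact hS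
    have h3 : (∑ k, ∑ l, M k l) + (∑ k, ∑ l, M l k) = 0 := by
      rw [hS, hS2]; ring
    field_simp
    linear_combination h3
  · intro x hx
    ext i j
    rw [denoise_apply]
    simp only [Matrix.sub_apply, vecMulVec_apply, onehat]
    rw [Finset.sum_sub_distrib, Finset.sum_sub_distrib, Finset.sum_const,
      Finset.sum_const, Finset.card_fin, nsmul_eq_mul, ← Finset.sum_mul,
      ← Finset.mul_sum]
    field_simp
    have hs : Real.sqrt (n : ℝ) ≠ 0 := Real.sqrt_ne_zero'.mpr (by positivity)
    rw [nsmul_eq_mul, mul_left_comm, mul_div_cancel₀ _ hs]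
    ring
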